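/- arXiv:2602.03532 — 8 statements merged into one kernel-verified Lean document; each statement's English description precedes it below -/
import Mathlib

section
/- Let m ≥ 1 and set n = 2m+1. Let p, q be complex numbers with p·q = c and p^n + q^n = 2d. Then x = p + q satisfies x^n = 2d + ∑_{j=0}^{m−1} B_{m,j} · c^{m−j} · x^{2j+1}, where B_{m,j} = (−1)^{m−1−j} · (2m+1)/(2j+1) · binom(m+j, 2j). -/
open Finset

noncomputable def bc (m j : ℕ) : ℂ :=
  if j ≤ m then
    (-1 : ℂ) ^ (m - j) * (2 * (m : ℂ) + 1) / (2 * (j : ℂ) + 1) * ((m + j).choose (2 * j) : ℂ)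
  else 0

lemma cast_ne' (n : ℕ) : (2 * (n : ℂ) + 1) ≠ 0 := by
  have : ((2 * n + 1 : ℕ) : ℂ) ≠ 0 := Nat.cast_ne_zero.mpr (by omega)
  push_cast at this; exact this

lemma bc_self (m : ℕ) : bc m m = 1 := by
  simp only [bc, le_refl, if_true, Nat.sub_self, pow_zero, ← two_mul, Nat.choose_self,
    Nat.cast_one, one_mul, mul_one]
  exact div_self (cast_ne' m)

lemma bc_zero {m j : ℕ} (h : m < j) : bc m j = 0 := by
  simp [bc, Nat.not_le.mpr h]

lemma bc_succ_self (m : ℕ) : bc (m + 1) m = -(2 * (m : ℂ) + 3) := by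
  simp only [bc, le_add_self, Nat.le_add_left, Nat.le_add_right, if_true, Nat.add_sub_cancel_left, pow_one,
    show m + 1 + m = 2 * m + 1 from by omega, Nat.choose_succ_self_right]
  push_cast
  field_simp [cast_ne' m]
  ring

lemma key0 (k : ℕ) : bc (k + 2) 0 = -2 * bc (k + 1) 0 - bc k 0 := by
  simp only [bc, Nat.zero_le, if_true, Nat.sub_zero, Nat.add_zero, mul_zero, Nat.choose_zero_right]
  push_cast
  rw [show k + 2 = (k + 1) + 1 from rfl, pow_succ, pow_succ (-1 : ℂ) k]
  ring

set_option maxHeartbeats 1600000 in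
lemma key (k j : ℕ) : bc (k + 2) (j + 1) = bc (k + 1) j - 2 * bc (k + 1) (j + 1) - bc k (j + 1) := by
  rcases lt_trichotomy j k with h | rfl | h
  · -- main case : j + 1 ≤ k
    obtain ⟨t, rfl⟩ : ∃ t, k = j + 1 + t := ⟨k - (j + 1), by omega⟩
    simp only [bc, if_pos (by omega : j + 1 ≤ j + 1 + t + 2), if_pos (by omega : j ≤ j + 1 + t + 1),
      if_pos (by omega : j + 1 ≤ j + 1 + t + 1), if_pos (by omega : j + 1 ≤ j + 1 + t)]
    rw [show j + 1 + t + 2 - (j + 1) = t + 2 from by omega,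
        show j + 1 + t + 1 - j = t + 2 from by omega,
        show j + 1 + t + 1 - (j + 1) = t + 1 from by omega,
        show j + 1 + t - (j + 1) = t from by omega,
        show j + 1 + t + 2 + (j + 1) = 2 * j + t + 4 from by omega,
        show j + 1 + t + 1 + j = 2 * j + t + 2 from by omega,
        show j + 1 + t + 1 + (j + 1) = 2 * j + t + 3 from by omega,
        show j + 1 + t + (j + 1) = 2 * j + t + 2 from by omega,
        show 2 * (j + 1) = 2 * j + 2 from by omega]
    have h1 := Nat.add_one_mul_choose_eq (2 * j + t + 2) (2 * j + 2)
    have h2 := Nat.choose_succ_right_eq (2 * j + t + 3) (2 * j + 2)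
    have h3 := Nat.add_one_mul_choose_eq (2 * j + t + 3) (2 * j + 2)
    have h4 := Nat.choose_succ_right_eq (2 * j + t + 4) (2 * j + 2)
    have h5 := Nat.choose_succ_right_eq (2 * j + t + 2) (2 * j)
    have h6 := Nat.choose_succ_right_eq (2 * j + t + 2) (2 * j + 1)
    rw [show 2 * j + t + 2 + 1 = 2 * j + t + 3 from by omega,
        show 2 * j + 2 + 1 = 2 * j + 3 from by omega] at h1
    rw [show 2 * j + t + 3 - (2 * j + 2) = t + 1 from by omega] at h2
    rw [show 2 * j + t + 3 + 1 = 2 * j + t + 4 from by omega,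
        show 2 * j + 2 + 1 = 2 * j + 3 from by omega] at h3
    rw [show 2 * j + 2 + 1 = 2 * j + 3 from by omega,
        show 2 * j + t + 4 - (2 * j + 2) = t + 2 from by omega] at h4
    rw [show 2 * j + t + 2 - 2 * j = t + 2 from by omega] at h5
    rw [show 2 * j + 1 + 1 = 2 * j + 2 from by omega,
        show 2 * j + t + 2 - (2 * j + 1) = t + 1 from by omega] at h6
    have h1c := congrArg (Nat.cast : ℕ → ℂ) h1
    have h2c := congrArg (Nat.cast : ℕ → ℂ) h2
    have h3c := congrArg (Nat.cast : ℕ → ℂ) h3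
    have h4c := congrArg (Nat.cast : ℕ → ℂ) h4
    have h5c := congrArg (Nat.cast : ℕ → ℂ) h5
    have h6c := congrArg (Nat.cast : ℕ → ℂ) h6
    push_cast at h1c h2c h3c h4c h5c h6c ⊢
    set X := (j : ℂ) with hX
    set Y := (t : ℂ) with hY
    have e1 : 2 * X + 1 ≠ 0 := by
      rw [show (2 * X + 1 : ℂ) = ((2 * j + 1 : ℕ) : ℂ) by rw [hX]; push_cast; ring]
      exact Nat.cast_ne_zero.mpr (by omega)
    have e3 : Y + 1 ≠ 0 := by
      rw [show (Y + 1 : ℂ) = ((t + 1 : ℕ) : ℂ) by rw [hY]; push_cast; ring]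
      exact Nat.cast_ne_zero.mpr (by omega)
    have e4 : Y + 2 ≠ 0 := by
      rw [show (Y + 2 : ℂ) = ((t + 2 : ℕ) : ℂ) by rw [hY]; push_cast; ring]
      exact Nat.cast_ne_zero.mpr (by omega)
    have e5 : 2 * (X + 1) + 1 ≠ 0 := by
      rw [show (2 * (X + 1) + 1 : ℂ) = ((2 * j + 3 : ℕ) : ℂ) by rw [hX]; push_cast; ring]
      exact Nat.cast_ne_zero.mpr (by omega)
    set c1 := (((2 * j + t + 4).choose (2 * j + 2) : ℕ) : ℂ) with hc1
    set c2 := (((2 * j + t + 2).choose (2 * j) : ℕ) : ℂ) with hc2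
    set c3 := (((2 * j + t + 3).choose (2 * j + 2) : ℕ) : ℂ) with hc3
    set c4 := (((2 * j + t + 2).choose (2 * j + 2) : ℕ) : ℂ) with hc4
    have E : (2 * X + 1) * (2 * X + 2 * Y + 7) * c1 =
        (2 * X + 3) * (2 * X + 2 * Y + 5) * c2 + 2 * (2 * X + 1) * (2 * X + 2 * Y + 5) * c3
          - (2 * X + 1) * (2 * X + 2 * Y + 3) * c4 := by
      apply mul_left_cancel₀ (mul_ne_zero e3 e4)
      linear_combination
        (-((2 * X + 1) * (2 * X + 2 * Y + 7) * (Y + 1))) * (h3c + h4c)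
        + (-((2 * X + 1) * (2 * X + 2 * Y + 7) * (2 * X + Y + 4)
            - 2 * (2 * X + 1) * (2 * X + 2 * Y + 5) * (Y + 2))) * (h1c + h2c)
        + ((2 * X + 3) * (2 * X + 2 * Y + 5)) * ((2 * X + 1) * h6c + (Y + 1) * h5c)
    rw [pow_succ (-1 : ℂ) (t + 1), pow_succ (-1 : ℂ) t]
    field_simp [e1, e5]
    linear_combination E
  · -- j = k
    rw [bc_self, bc_succ_self, bc_succ_self, bc_zero (by omega)]
    push_cast; ring
  · -- j ≥ k + 1
    rcases eq_or_lt_of_le (by omega : k + 1 ≤ j) with rfl | h2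
    · rw [bc_self, bc_self, bc_zero (by omega), bc_zero (by omega)]; ring
    · rw [bc_zero (by omega), bc_zero (by omega), bc_zero (by omega), bc_zero (by omega)]; ring

lemma Drec (k : ℕ) (p q : ℂ) :
    p ^ (2 * (k + 2) + 1) + q ^ (2 * (k + 2) + 1) =
      ((p + q) ^ 2 - 2 * (p * q)) * (p ^ (2 * (k + 1) + 1) + q ^ (2 * (k + 1) + 1))
        - (p * q) ^ 2 * (p ^ (2 * k + 1) + q ^ (2 * k + 1)) := by
  rw [show 2 * (k + 2) + 1 = 2 * k + 1 + 4 from by ring,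
      show 2 * (k + 1) + 1 = 2 * k + 1 + 2 from by ring, pow_add, pow_add, pow_add, pow_add]
  ring

lemma waring (m : ℕ) (p q : ℂ) :
    p ^ (2 * m + 1) + q ^ (2 * m + 1) =
      ∑ j ∈ Finset.range (m + 1), bc m j * (p * q) ^ (m - j) * (p + q) ^ (2 * j + 1) := by
  induction m using Nat.strong_induction_on with
  | _ m ih =>
  rcases m with _ | m
  · simp [Finset.sum_range_one, bc_self]
  rcases m with _ | k
  · have h0 : bc 1 0 = -3 := by norm_num [bc]
    rw [Finset.sum_range_succ, Finset.sum_range_one, bc_self, h0]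
    norm_num
    ring
  · simp only [show k + 1 + 1 = k + 2 from rfl]
    rw [Drec k p q, ih (k + 1) (by omega), ih k (by omega)]
    set S1 := ∑ j ∈ Finset.range (k + 1 + 1), bc (k + 1) j * (p * q) ^ (k + 1 - j) * (p + q) ^ (2 * j + 1) with hS1
    set S0 := ∑ j ∈ Finset.range (k + 1), bc k j * (p * q) ^ (k - j) * (p + q) ^ (2 * j + 1) with hS0
    have hA : (p + q) ^ 2 * S1
        = ∑ i ∈ Finset.range (k + 2), bc (k + 1) i * (p * q) ^ (k + 1 - i) * (p + q) ^ (2 * i + 3) := by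
      rw [hS1, Finset.mul_sum]
      refine Finset.sum_congr rfl fun i hi => ?_
      rw [show 2 * i + 3 = (2 * i + 1) + 2 from by ring, pow_add]
      ring
    have hB : 2 * (p * q) * S1
        = (∑ i ∈ Finset.range (k + 2), 2 * bc (k + 1) (i + 1) * (p * q) ^ (k + 1 - i) * (p + q) ^ (2 * i + 3))
          + 2 * bc (k + 1) 0 * (p * q) ^ (k + 2) * (p + q) := by
      have hB1 : 2 * (p * q) * S1
          = ∑ j ∈ Finset.range (k + 1 + 1), 2 * bc (k + 1) j * (p * q) ^ (k + 2 - j) * (p + q) ^ (2 * j + 1) := by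
        rw [hS1, Finset.mul_sum]
        refine Finset.sum_congr rfl fun i hi => ?_
        rw [Finset.mem_range] at hi
        rw [show k + 2 - i = (k + 1 - i) + 1 from by omega, pow_succ]
        ring
      rw [hB1]
      conv_lhs => rw [Finset.sum_range_succ']
      congr 1
      · conv_rhs => rw [show (k + 2 : ℕ) = k + 1 + 1 from rfl, Finset.sum_range_succ]
        rw [bc_zero (show k + 1 < k + 1 + 1 from by omega)]
        simp only [mul_zero, zero_mul, add_zero]
        refine Finset.sum_congr rfl fun i hi => ?_
        rw [show 2 * (i + 1) + 1 = 2 * i + 3 from by ring, show k + 2 - (i + 1) = k + 1 - i from by omega]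
      · norm_num
    have hC : (p * q) ^ 2 * S0
        = (∑ i ∈ Finset.range (k + 2), bc k (i + 1) * (p * q) ^ (k + 1 - i) * (p + q) ^ (2 * i + 3))
          + bc k 0 * (p * q) ^ (k + 2) * (p + q) := by
      have hC1 : (p * q) ^ 2 * S0
          = ∑ j ∈ Finset.range (k + 1), bc k j * (p * q) ^ (k + 2 - j) * (p + q) ^ (2 * j + 1) := by
        rw [hS0, Finset.mul_sum]
        refine Finset.sum_congr rfl fun i hi => ?_
        rw [Finset.mem_range] at hi
        rw [show k + 2 - i = (k - i) + 2 from by omega, pow_add]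
        ring
      rw [hC1]
      conv_lhs => rw [Finset.sum_range_succ']
      congr 1
      · conv_rhs => rw [show (k + 2 : ℕ) = k + 1 + 1 from rfl, Finset.sum_range_succ,
          Finset.sum_range_succ]
        rw [bc_zero (show k < k + 1 from by omega), bc_zero (show k < k + 1 + 1 from by omega)]
        simp only [mul_zero, zero_mul, add_zero]
        refine Finset.sum_congr rfl fun i hi => ?_
        rw [show 2 * (i + 1) + 1 = 2 * i + 3 from by ring, show k + 2 - (i + 1) = k + 1 - i from by omega]
      · norm_num
    calc ((p + q) ^ 2 - 2 * (p * q)) * S1 - (p * q) ^ 2 * S0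
        = ((∑ i ∈ Finset.range (k + 2), bc (k + 1) i * (p * q) ^ (k + 1 - i) * (p + q) ^ (2 * i + 3))
            - (∑ i ∈ Finset.range (k + 2), 2 * bc (k + 1) (i + 1) * (p * q) ^ (k + 1 - i) * (p + q) ^ (2 * i + 3))
            - (∑ i ∈ Finset.range (k + 2), bc k (i + 1) * (p * q) ^ (k + 1 - i) * (p + q) ^ (2 * i + 3)))
          + (-2 * bc (k + 1) 0 - bc k 0) * (p * q) ^ (k + 2) * (p + q) := by
          rw [show ((p + q) ^ 2 - 2 * (p * q)) * S1 - (p * q) ^ 2 * S0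
            = (p + q) ^ 2 * S1 - 2 * (p * q) * S1 - (p * q) ^ 2 * S0 from by ring, hA, hB, hC]
          ring
      _ = (∑ i ∈ Finset.range (k + 2),
            bc (k + 2) (i + 1) * (p * q) ^ (k + 1 - i) * (p + q) ^ (2 * i + 3))
          + bc (k + 2) 0 * (p * q) ^ (k + 2) * (p + q) := by
          rw [← Finset.sum_sub_distrib, ← Finset.sum_sub_distrib, key0]
          congr 1
          refine Finset.sum_congr rfl fun i hi => ?_
          rw [key]
          ring
      _ = ∑ j ∈ Finset.range (k + 2 + 1), bc (k + 2) j * (p * q) ^ (k + 2 - j) * (p + q) ^ (2 * j + 1) := by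
          conv_rhs => rw [Finset.sum_range_succ']
          congr 1
          · refine Finset.sum_congr rfl fun i hi => ?_
            rw [show 2 * (i + 1) + 1 = 2 * i + 3 from by ring, show k + 2 - (i + 1) = k + 1 - i from by omega]
          · norm_num

theorem stmt_4 (m : ℕ) (hm : 1 ≤ m) (p q c d : ℂ)
    (hc : p * q = c) (hd : p ^ (2 * m + 1) + q ^ (2 * m + 1) = 2 * d) :
    (p + q) ^ (2 * m + 1) =
      2 * d + ∑ j ∈ Finset.range m,
        ((-1 : ℂ) ^ (m - 1 - j) * (2 * (m : ℂ) + 1) / (2 * (j : ℂ) + 1) *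
          ((m + j).choose (2 * j) : ℂ)) * c ^ (m - j) * (p + q) ^ (2 * j + 1) := by
  have hw := waring m p q
  rw [hc, Finset.sum_range_succ, bc_self, Nat.sub_self, pow_zero, hd] at hw
  have hsum : ∑ j ∈ Finset.range m,
        ((-1 : ℂ) ^ (m - 1 - j) * (2 * (m : ℂ) + 1) / (2 * (j : ℂ) + 1) *
          ((m + j).choose (2 * j) : ℂ)) * c ^ (m - j) * (p + q) ^ (2 * j + 1)
      = -∑ j ∈ Finset.range m, bc m j * c ^ (m - j) * (p + q) ^ (2 * j + 1) := by
    rw [← Finset.sum_neg_distrib]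
    refine Finset.sum_congr rfl fun j hj => ?_
    rw [Finset.mem_range] at hj
    have hb : bc m j = -((-1 : ℂ) ^ (m - 1 - j) * (2 * (m : ℂ) + 1) / (2 * (j : ℂ) + 1) *
        ((m + j).choose (2 * j) : ℂ)) := by
      simp only [bc, if_pos (le_of_lt hj)]
      rw [show m - j = (m - 1 - j) + 1 from by omega, pow_succ]
      ring
    rw [hb]
    ring
  rw [hsum]
  linear_combination -hw
end

section
/- For every r ≥ 1 and complex numbers p, q: p^r + q^r = ∑_{i=0}^{⌊r/2⌋} (−1)^i · (r/(r−i)) · binom(r−i, i) · (p·q)^i · (p+q)^{r−2i}. -/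
def wc (r : ℕ) : ℕ → ℕ
  | 0 => 1
  | (i+1) => (r - (i+1)).choose (i+1) + (r - i - 2).choose i

lemma wc_eq_zero {r i : ℕ} (hr : 2 ≤ r) (h : r < 2 * i) (hi : 1 ≤ i) : wc r i = 0 := by
  rcases i with _ | j
  · omega
  show (r - (j+1)).choose (j+1) + (r - j - 2).choose j = 0
  rcases Nat.eq_zero_or_pos j with rfl | hj
  · omega
  · rw [Nat.choose_eq_zero_of_lt (by omega), Nat.choose_eq_zero_of_lt (by omega)]

lemma wc_rec {n i : ℕ} (hn : 2 ≤ n) (hi : i ≤ n) :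
    wc (n+2) (i+1) = wc (n+1) (i+1) + wc n i := by
  rcases i with _ | j
  · show (n+1).choose 1 + n.choose 0 = (n.choose 1 + (n-1).choose 0) + 1
    simp [Nat.choose_one_right]
  show (n+2-(j+2)).choose (j+2) + (n+2-(j+1)-2).choose (j+1)
      = ((n+1-(j+2)).choose (j+2) + (n+1-(j+1)-2).choose (j+1))
        + ((n-(j+1)).choose (j+1) + (n-j-2).choose j)
  rcases Nat.lt_or_ge (j+1) n with h | h
  · obtain ⟨m, rfl⟩ : ∃ m, n = j + 2 + m := ⟨n - (j+2), by omega⟩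
    simp only [show j+2+m+2-(j+2) = m+2 from by omega, show j+2+m+2-(j+1)-2 = m+1 from by omega,
      show j+2+m+1-(j+2) = m+1 from by omega, show j+2+m+1-(j+1)-2 = m from by omega,
      show j+2+m-(j+1) = m+1 from by omega, show j+2+m-j-2 = m from by omega]
    rw [Nat.choose_succ_succ (m+1) (j+1), Nat.choose_succ_succ m j]
    ring
  · have hj : n = j + 1 := by omega
    subst hj
    simp only [show j+1+2-(j+2) = 1 from by omega, show j+1+2-(j+1)-2 = 0 from by omega,
      show j+1+1-(j+2) = 0 from by omega, show j+1+1-(j+1)-2 = 0 from by omega,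
      show j+1-(j+1) = 0 from by omega, show j+1-j-2 = 0 from by omega]
    simp [Nat.choose_eq_zero_of_lt, Nat.choose_eq_zero_of_lt (show (0:ℕ) < j from by omega)]

lemma sum_peel (g : ℕ → ℂ) (k : ℕ) :
    ∑ i ∈ Finset.range (k+2), g i = g 0 + g (k+1) + ∑ i ∈ Finset.range k, g (i+1) := by
  rw [Finset.sum_range_succ, Finset.sum_range_succ']
  ring

lemma term_step (p q : ℂ) {n i : ℕ} (hn : 2 ≤ n) (hi : i ≤ n) :
    (-1:ℂ)^(i+1) * (wc (n+2) (i+1) : ℂ) * (p*q)^(i+1) * (p+q)^(n+2-2*(i+1))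
      = (p+q) * ((-1:ℂ)^(i+1) * (wc (n+1) (i+1) : ℂ) * (p*q)^(i+1) * (p+q)^(n+1-2*(i+1)))
        - p*q * ((-1:ℂ)^i * (wc n i : ℂ) * (p*q)^i * (p+q)^(n-2*i)) := by
  have hrec := wc_rec hn hi
  rcases Nat.lt_or_ge (2*i) n with h | h
  · rw [show n+2-2*(i+1) = (n+1-2*(i+1)) + 1 from by omega,
      show n - 2*i = (n+1-2*(i+1)) + 1 from by omega, hrec, pow_succ]
    push_cast
    ring
  · have hz : wc (n+1) (i+1) = 0 := wc_eq_zero (by omega) (by omega) (by omega)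
    have hz2 : wc (n+2) (i+1) = wc n i := by rw [hrec, hz]; omega
    rw [hz, hz2, show n+2-2*(i+1) = n - 2*i from by omega,
      show n+1-2*(i+1) = n+1-2*(i+1) from rfl]
    push_cast
    ring

lemma wc_main (p q : ℂ) : ∀ n, 2 ≤ n →
    p ^ n + q ^ n =
      ∑ i ∈ Finset.range (n + 1),
        (-1 : ℂ) ^ i * (wc n i : ℂ) * (p * q) ^ i * (p + q) ^ (n - 2 * i) := by
  intro n
  induction n using Nat.strong_induction_on with
  | _ n IH =>
    rcases n with _ | _ | _ | _ | n
    · omega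
    · omega
    · intro _
      simp [Finset.sum_range_succ, wc]
      ring
    · intro _
      simp [Finset.sum_range_succ, wc, Nat.choose]
      ring
    · intro _
      have h1 := IH (n+3) (by omega) (by omega)
      have h0 := IH (n+2) (by omega) (by omega)
      have key : p ^ (n+4) + q ^ (n+4)
          = (p+q) * (p ^ (n+3) + q ^ (n+3)) - p*q * (p ^ (n+2) + q ^ (n+2)) := by ring
      rw [key, h1, h0]
      rw [show (n+4+1) = (n+3)+2 from rfl,
        sum_peel (fun i => (-1:ℂ)^i * (wc (n+4) i : ℂ) * (p*q)^i * (p+q)^(n+4-2*i)) (n+3),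
        show (n+3+1) = (n+3)+1 from rfl,
        Finset.sum_range_succ' (fun i => (-1:ℂ)^i * (wc (n+3) i : ℂ) * (p*q)^i * (p+q)^(n+3-2*i)) (n+3)]
      have hlast : ((-1:ℂ)^(n+4) * (wc (n+4) (n+4) : ℂ) * (p*q)^(n+4) * (p+q)^(n+4-2*(n+4))) = 0 := by
        rw [wc_eq_zero (by omega) (by omega) (by omega)]
        simp
      simp only [hlast]
      have hterm : ∀ i ∈ Finset.range (n+3),
          (-1:ℂ)^(i+1) * (wc (n+4) (i+1) : ℂ) * (p*q)^(i+1) * (p+q)^(n+4-2*(i+1))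
            = (p+q) * ((-1:ℂ)^(i+1) * (wc (n+3) (i+1) : ℂ) * (p*q)^(i+1) * (p+q)^(n+3-2*(i+1)))
              - p*q * ((-1:ℂ)^i * (wc (n+2) i : ℂ) * (p*q)^i * (p+q)^(n+2-2*i)) := by
        intro i hi
        have := Finset.mem_range.mp hi
        exact term_step p q (n := n+2) (by omega) (by omega)
      rw [Finset.sum_congr rfl hterm, Finset.sum_sub_distrib, ← Finset.mul_sum, ← Finset.mul_sum]
      simp [wc, pow_succ]
      ring

lemma coeff_eq {r i : ℕ} (h1 : 1 ≤ i) (h2 : 2*i ≤ r) :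
    r * (r-i).choose i = (r-i) * wc r i := by
  obtain ⟨j, rfl⟩ : ∃ j, i = j + 1 := ⟨i - 1, by omega⟩
  have hwc : wc r (j+1) = (r-(j+1)).choose (j+1) + (r-j-2).choose j := rfl
  have hkey : (r - (j+1)) * (r-j-2).choose j = (r-(j+1)).choose (j+1) * (j+1) := by
    have := Nat.add_one_mul_choose_eq (r-j-2) j
    have hr : r - (j+1) = (r-j-2) + 1 := by omega
    rw [hr]
    simpa using this
  have hr2 : r = (r - (j+1)) + (j+1) := by omega
  rw [hwc, Nat.mul_add, hkey]
  nth_rewrite 1 [hr2]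
  ring

theorem stmt_5 (r : ℕ) (hr : 1 ≤ r) (p q : ℂ) :
    p ^ r + q ^ r =
      ∑ i ∈ Finset.range (r / 2 + 1),
        (-1 : ℂ) ^ i * ((r : ℂ) / ((r - i : ℕ) : ℂ)) * ((r - i).choose i : ℂ) *
          (p * q) ^ i * (p + q) ^ (r - 2 * i) := by
  rcases Nat.lt_or_ge r 2 with h2 | h2
  · have : r = 1 := by omega
    subst this
    simp
  rw [wc_main p q r h2]
  rw [← Finset.sum_subset (Finset.range_subset_range.mpr (by omega : r/2 + 1 ≤ r + 1))
    (by
      intro i hi hni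
      have hi1 := Finset.mem_range.mp hi
      have hi2 : r/2 + 1 ≤ i := by
        by_contra hc
        exact hni (Finset.mem_range.mpr (by omega))
      rw [wc_eq_zero h2 (by omega) (by omega)]
      simp)]
  refine Finset.sum_congr rfl fun i hi => ?_
  have hir : i ≤ r / 2 := by have := Finset.mem_range.mp hi; omega
  rcases Nat.eq_zero_or_pos i with rfl | hi1
  · have : ((r:ℂ)) ≠ 0 := Nat.cast_ne_zero.mpr (by omega)
    simp [this, div_self, wc]
  · have hne : (((r-i:ℕ)):ℂ) ≠ 0 := Nat.cast_ne_zero.mpr (by omega)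
    have : ((r : ℂ) / ((r - i : ℕ) : ℂ)) * ((r - i).choose i : ℂ) = (wc r i : ℂ) := by
      rw [div_mul_eq_mul_div, div_eq_iff hne]
      exact_mod_cast (coeff_eq hi1 (by omega)).trans (Nat.mul_comm _ _)
    rw [← this]
    ring
end

section
/- For all integers m > j ≥ 0, the sum ∑_{t=0}^{m−j} (−1)^t · binom(2m+1, m−j−t) · (2(j+t)+1) · binom(2j+t, t) equals 0. -/
/-- Telescoping certificate for the alternating binomial sum. -/
def cardG (m j t : ℕ) : ℤ :=
  (-1 : ℤ) ^ (t + 1) * t * (t + m + j + 1) *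
    ((2 * m + 1).choose (m + j + 1 + t) : ℤ) * ((2 * j + t).choose t : ℤ)

theorem stmt_6 (m j : ℕ) (h : j < m) :
    ∑ t ∈ Finset.range (m - j + 1),
      (-1 : ℤ) ^ t * ((2 * m + 1).choose (m - j - t) : ℤ) * (2 * (j + t) + 1) *
        ((2 * j + t).choose t : ℤ) = 0 := by
  have key : ∀ t ∈ Finset.range (m - j + 1),
      ((m : ℤ) - j) *
        ((-1 : ℤ) ^ t * ((2 * m + 1).choose (m - j - t) : ℤ) * (2 * (j + t) + 1) *
          ((2 * j + t).choose t : ℤ)) = cardG m j (t + 1) - cardG m j t := by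
    intro t ht
    simp only [Finset.mem_range] at ht
    have htle : t ≤ m - j := by omega
    have hsymm : (2 * m + 1).choose (m - j - t) = (2 * m + 1).choose (m + j + 1 + t) := by
      have h1 : m - j - t = 2 * m + 1 - (m + j + 1 + t) := by omega
      rw [h1, Nat.choose_symm (by omega)]
    rw [hsymm]
    unfold cardG
    -- fact 1 : absorption for the second binomial
    have e1 : (t + 1) * ((2 * j + t + 1).choose (t + 1))
        = (2 * j + t + 1) * ((2 * j + t).choose t) := by
      have h1 := Nat.add_one_mul_choose_eq (2 * j + t) t
      exact (mul_comm (t + 1) _).trans h1.symm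
    have f1 : ((t : ℤ) + 1) * ((2 * j + t + 1).choose (t + 1) : ℤ)
        = (2 * (j : ℤ) + t + 1) * ((2 * j + t).choose t : ℤ) := by exact_mod_cast e1
    -- fact 2 : absorption for the first binomial
    have hnat := Nat.choose_succ_right_eq (2 * m + 1) (m + j + 1 + t)
    have hsub : 2 * m + 1 - (m + j + 1 + t) = m - j - t := by omega
    rw [hsub] at hnat
    have f2 : ((m : ℤ) + j + t + 2) * ((2 * m + 1).choose (m + j + 1 + t + 1) : ℤ)
        = ((m : ℤ) - j - t) * ((2 * m + 1).choose (m + j + 1 + t) : ℤ) := by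
      have hc : ((2 * m + 1).choose (m + j + 1 + t + 1) : ℤ) * ((m : ℤ) + j + 1 + t + 1)
          = ((2 * m + 1).choose (m + j + 1 + t) : ℤ) * ((m - j - t : ℕ) : ℤ) := by
        exact_mod_cast hnat
      have hsub2 : ((m - j - t : ℕ) : ℤ) = (m : ℤ) - j - t := by omega
      rw [hsub2] at hc
      linarith [hc]
    have h3 : ((t : ℤ) + 1) * ((m : ℤ) + j + t + 2) *
          ((2 * m + 1).choose (m + j + 1 + t + 1) : ℤ) *
          ((2 * j + t + 1).choose (t + 1) : ℤ)
        = ((m : ℤ) - j - t) * (2 * (j : ℤ) + t + 1) *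
          ((2 * m + 1).choose (m + j + 1 + t) : ℤ) * ((2 * j + t).choose t : ℤ) := by
      linear_combination (((m : ℤ) + j + t + 2) *
          ((2 * m + 1).choose (m + j + 1 + t + 1) : ℤ)) * f1 +
        ((2 * (j : ℤ) + t + 1) * ((2 * j + t).choose t : ℤ)) * f2
    rw [show m + j + 1 + (t + 1) = m + j + 1 + t + 1 from rfl,
      show 2 * j + (t + 1) = 2 * j + t + 1 from rfl]
    push_cast
    linear_combination (-(-1 : ℤ) ^ t) * h3
  have hsum : ((m : ℤ) - j) *
      ∑ t ∈ Finset.range (m - j + 1),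
        (-1 : ℤ) ^ t * ((2 * m + 1).choose (m - j - t) : ℤ) * (2 * (j + t) + 1) *
          ((2 * j + t).choose t : ℤ)
      = cardG m j (m - j + 1) - cardG m j 0 := by
    rw [Finset.mul_sum, Finset.sum_congr rfl key, Finset.sum_range_sub (cardG m j)]
  have hg0 : cardG m j 0 = 0 := by simp [cardG]
  have hgend : cardG m j (m - j + 1) = 0 := by
    have hidx : m + j + 1 + (m - j + 1) = 2 * m + 2 := by omega
    unfold cardG
    rw [hidx, Nat.choose_eq_zero_of_lt (by omega)]
    simp
  rw [hg0, hgend] at hsum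
  have hne : ((m : ℤ) - j) ≠ 0 := by
    have : (j : ℤ) < m := by exact_mod_cast h
    omega
  have hz := mul_eq_zero.mp (by linarith [hsum] : ((m : ℤ) - j) *
      ∑ t ∈ Finset.range (m - j + 1),
        (-1 : ℤ) ^ t * ((2 * m + 1).choose (m - j - t) : ℤ) * (2 * (j + t) + 1) *
          ((2 * j + t).choose t : ℤ) = 0)
  tauto
end

section
/- For all integers m > j ≥ 0, ∑_{t=0}^{m−j−1} (−1)^t · binom(2m+1, m−j−t) · (2(j+t)+1) · binom(2j+t, t) = (−1)^{m−j−1} · (2m+1) · binom(m+j, m−j). -/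
lemma stmt_7_aux (j n : ℕ) : ∀ s, s ≤ n →
    (n : ℤ) * ∑ t ∈ Finset.range s,
      (-1 : ℤ) ^ t * ((2 * j + 2 * n + 1).choose (n - t) : ℤ) * (2 * (j + t) + 1) *
        ((2 * j + t).choose t : ℤ)
    = (-1 : ℤ) ^ s * (-1) * s * (s + 2 * j + n + 1) *
        ((2 * j + 2 * n + 1).choose (n - s) : ℤ) * ((2 * j + s).choose s : ℤ) := by
  intro s
  induction s with
  | zero => simp
  | succ s ih =>
    intro hs
    rw [Finset.sum_range_succ, mul_add, ih (by omega)]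
    obtain ⟨d, rfl⟩ : ∃ d, n = s + 1 + d := ⟨n - (s + 1), by omega⟩
    have h1 : s + 1 + d - s = d + 1 := by omega
    have h2 : s + 1 + d - (s + 1) = d := by omega
    have h3 : 2 * j + (s + 1) = 2 * j + s + 1 := by omega
    rw [h1, h2, h3]
    have e1nat : (2 * j + 2 * (s + 1 + d) + 1).choose (d + 1) * (d + 1) =
        (2 * j + 2 * (s + 1 + d) + 1).choose d * (s + 2 * j + (s + 1 + d) + 2) := by
      have := Nat.choose_succ_right_eq (2 * j + 2 * (s + 1 + d) + 1) d
      have hN : 2 * j + 2 * (s + 1 + d) + 1 - d = s + 2 * j + (s + 1 + d) + 2 := by omega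
      rw [hN] at this
      exact this
    have e2nat : (2 * j + s + 1) * (2 * j + s).choose s =
        (2 * j + s + 1).choose (s + 1) * (s + 1) := Nat.add_one_mul_choose_eq (2 * j + s) s
    have e1 := congrArg (Nat.cast : ℕ → ℤ) e1nat
    have e2 := congrArg (Nat.cast : ℕ → ℤ) e2nat
    push_cast at e1 e2
    push_cast
    linear_combination ((-1 : ℤ) ^ s * (2 * (j : ℤ) + s + 1) * ((2 * j + s).choose s : ℤ)) * e1
      + ((-1 : ℤ) ^ s * ((s : ℤ) + 2 * j + (s + 1 + d) + 2) *
          ((2 * j + 2 * (s + 1 + d) + 1).choose d : ℤ)) * e2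

theorem stmt_7 (m j : ℕ) (h : j < m) :
    ∑ t ∈ Finset.range (m - j),
      (-1 : ℤ) ^ t * ((2 * m + 1).choose (m - j - t) : ℤ) * (2 * (j + t) + 1) *
        ((2 * j + t).choose t : ℤ) =
      (-1 : ℤ) ^ (m - j - 1) * (2 * m + 1) * ((m + j).choose (m - j) : ℤ) := by
  obtain ⟨k, rfl⟩ : ∃ k, m = j + (k + 1) := ⟨m - j - 1, by omega⟩
  have hmj : j + (k + 1) - j = k + 1 := by omega
  have h2m : 2 * (j + (k + 1)) + 1 = 2 * j + 2 * (k + 1) + 1 := by ring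
  have hjm : j + (k + 1) + j = 2 * j + (k + 1) := by ring
  have hk1 : k + 1 - 1 = k := rfl
  rw [hmj, h2m, hjm, hk1]
  have key := stmt_7_aux j (k + 1) (k + 1) le_rfl
  rw [Nat.sub_self, Nat.choose_zero_right] at key
  have hne : ((k : ℤ) + 1) ≠ 0 := by positivity
  apply mul_left_cancel₀ hne
  push_cast at key ⊢
  linear_combination key
end

section
/- Let n be odd, c, d real with d^2 − c^n < 0 and c > 0. Set α = arccos(d / c^{n/2}). Then for every integer j, x_j = 2·sqrt(c)·cos((α + 2πj)/n) is a real root of the generalized Cardano polynomial C_{n,c,d}(x) = x^n − ∑_{j=0}^{m−1} B_{m,j} c^{m−j} x^{2j+1} − 2d, where n = 2m+1. -/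
open Finset Real

noncomputable def Acoef (m i : ℕ) : ℝ :=
  (-1)^(m+i) * (2*m+1)/(2*i+1) * ((m+i).choose (2*i))

lemma Acoef_eq_zero {m i : ℕ} (h : m < i) : Acoef m i = 0 := by
  simp [Acoef, Nat.choose_eq_zero_of_lt (by omega : m + i < 2*i)]

-- the division-free core identity for i ≥ 1
lemma core (m i : ℕ) :
    (2*(m:ℝ)+5)/(2*i+3) * ((m+i+3).choose (2*i+2)) =
      (2*m+3)/(2*i+1) * ((m+i+1).choose (2*i)) +
      2*(2*m+3)/(2*i+3) * ((m+i+2).choose (2*i+2)) -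
      (2*m+1)/(2*i+3) * ((m+i+1).choose (2*i+2)) := by
  rcases lt_trichotomy i m with hlt | rfl | hgt
  · -- i < m : m = i + a + 1
    obtain ⟨a, rfl⟩ : ∃ a, m = i + a + 1 := ⟨m - i - 1, by omega⟩
    rw [Nat.cast_choose ℝ (by omega : 2*i+2 ≤ i+a+1+i+3),
        Nat.cast_choose ℝ (by omega : 2*i ≤ i+a+1+i+1),
        Nat.cast_choose ℝ (by omega : 2*i+2 ≤ i+a+1+i+2),
        Nat.cast_choose ℝ (by omega : 2*i+2 ≤ i+a+1+i+1)]
    have e1 : i+a+1+i+3 - (2*i+2) = a+2 := by omega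
    have e2 : i+a+1+i+1 - 2*i = a+2 := by omega
    have e3 : i+a+1+i+2 - (2*i+2) = a+1 := by omega
    have e4 : i+a+1+i+1 - (2*i+2) = a := by omega
    rw [e1, e2, e3, e4]
    have f1 : i+a+1+i+3 = (2*i+a+2) + 2 := by omega
    have f2 : i+a+1+i+1 = 2*i+a+2 := by omega
    have f3 : i+a+1+i+2 = (2*i+a+2)+1 := by omega
    rw [f1, f2, f3]
    have g1 : ((2*i+a+2+2).factorial : ℝ) = (2*i+a+4)*(2*i+a+3)*(2*i+a+2).factorial := by
      push_cast [Nat.factorial_succ]; ring_nf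
    have g2 : ((2*i+a+2+1).factorial : ℝ) = (2*i+a+3)*(2*i+a+2).factorial := by
      push_cast [Nat.factorial_succ]; ring_nf
    have g3 : ((2*i+2).factorial : ℝ) = (2*i+2)*(2*i+1)*(2*i).factorial := by
      push_cast [Nat.factorial_succ]; ring_nf
    have g4 : ((a+2).factorial : ℝ) = (a+2)*(a+1)*a.factorial := by
      push_cast [Nat.factorial_succ]; ring_nf
    have g5 : ((a+1).factorial : ℝ) = (a+1)*a.factorial := by
      push_cast [Nat.factorial_succ]; ring_nf
    rw [g1, g2, g3, g4, g5]
    have n1 : ((2*i+a+2).factorial : ℝ) ≠ 0 := Nat.cast_ne_zero.2 (Nat.factorial_ne_zero _)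
    have n2 : ((2*i).factorial : ℝ) ≠ 0 := Nat.cast_ne_zero.2 (Nat.factorial_ne_zero _)
    have n3 : (a.factorial : ℝ) ≠ 0 := Nat.cast_ne_zero.2 (Nat.factorial_ne_zero _)
    have p1 : (2*(i:ℝ)+3) ≠ 0 := by positivity
    have p2 : (2*(i:ℝ)+1) ≠ 0 := by positivity
    have p3 : ((a:ℝ)+2) ≠ 0 := by positivity
    have p4 : ((a:ℝ)+1) ≠ 0 := by positivity
    have p5 : (2*(i:ℝ)+2) ≠ 0 := by positivity
    field_simp
    push_cast
    ring
  · -- i = m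
    have c1 : (i+i+3).choose (2*i+2) = 2*i+3 := by
      have : i+i+3 = (2*i+2)+1 := by omega
      rw [this, Nat.choose_succ_self_right]
    have c2 : (i+i+1).choose (2*i) = 2*i+1 := by
      have : i+i+1 = (2*i)+1 := by omega
      rw [this, Nat.choose_succ_self_right]
    have c3 : (i+i+2).choose (2*i+2) = 1 := by
      have : i+i+2 = 2*i+2 := by omega
      rw [this, Nat.choose_self]
    have c4 : (i+i+1).choose (2*i+2) = 0 := Nat.choose_eq_zero_of_lt (by omega)
    rw [c1, c2, c3, c4]
    have p1 : (2*(i:ℝ)+3) ≠ 0 := by positivity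
    have p2 : (2*(i:ℝ)+1) ≠ 0 := by positivity
    push_cast
    field_simp
    ring
  · rcases Nat.eq_or_lt_of_le hgt with rfl' | hgt2
    · -- i = m+1
      obtain rfl : i = m+1 := rfl'.symm
      have c1 : (m+(m+1)+3).choose (2*(m+1)+2) = 1 := by
        have : m+(m+1)+3 = 2*(m+1)+2 := by omega
        rw [this, Nat.choose_self]
      have c2 : (m+(m+1)+1).choose (2*(m+1)) = 1 := by
        have : m+(m+1)+1 = 2*(m+1) := by omega
        rw [this, Nat.choose_self]
      have c3 : (m+(m+1)+2).choose (2*(m+1)+2) = 0 := Nat.choose_eq_zero_of_lt (by omega)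
      have c4 : (m+(m+1)+1).choose (2*(m+1)+2) = 0 := Nat.choose_eq_zero_of_lt (by omega)
      rw [c1, c2, c3, c4]
      have p1 : 2*((m:ℝ)+1)+3 ≠ 0 := by positivity
      have p2 : 2*((m:ℝ)+1)+1 ≠ 0 := by positivity
      push_cast
      field_simp
      ring
    · -- i ≥ m+2
      have c1 : (m+i+3).choose (2*i+2) = 0 := Nat.choose_eq_zero_of_lt (by omega)
      have c2 : (m+i+1).choose (2*i) = 0 := Nat.choose_eq_zero_of_lt (by omega)
      have c3 : (m+i+2).choose (2*i+2) = 0 := Nat.choose_eq_zero_of_lt (by omega)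
      have c4 : (m+i+1).choose (2*i+2) = 0 := Nat.choose_eq_zero_of_lt (by omega)
      rw [c1, c2, c3, c4]
      norm_num

lemma Acoef_rec (m i : ℕ) :
    Acoef (m+2) i = (if i = 0 then 0 else Acoef (m+1) (i-1)) - 2 * Acoef (m+1) i - Acoef m i := by
  rcases i with _ | i
  · simp [Acoef, pow_succ]
    push_cast
    ring
  · simp only [Nat.succ_ne_zero, if_neg, Nat.add_sub_cancel]
    have h := core m i
    unfold Acoef
    have e1 : m+2+(i+1) = m+i+3 := by omega
    have e2 : 2*(i+1) = 2*i+2 := by omega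
    have e3 : m+1+i = m+i+1 := by omega
    have e4 : m+1+(i+1) = m+i+2 := by omega
    have e5 : m+(i+1) = m+i+1 := by omega
    rw [e1, e2, e3, e4, e5]
    push_cast
    linear_combination (-(-1:ℝ)^(m+i)) * h

lemma sum_rec (m : ℕ) (u : ℝ) :
    ∑ i ∈ range (m+3), Acoef (m+2) i * u^(2*i+1)
      = (u^2 - 2) * (∑ i ∈ range (m+2), Acoef (m+1) i * u^(2*i+1))
        - ∑ i ∈ range (m+1), Acoef m i * u^(2*i+1) := by
  have ext2 : ∑ i ∈ range (m+1), Acoef m i * u^(2*i+1)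
      = ∑ i ∈ range (m+3), Acoef m i * u^(2*i+1) := by
    rw [Finset.sum_range_succ (n := m+2), Finset.sum_range_succ (n := m+1),
      Acoef_eq_zero (show m < m+1 by omega), Acoef_eq_zero (show m < m+2 by omega)]; ring
  have shift : u^2 * ∑ i ∈ range (m+2), Acoef (m+1) i * u^(2*i+1)
      = ∑ i ∈ range (m+3), (if i = 0 then 0 else Acoef (m+1) (i-1)) * u^(2*i+1) := by
    rw [Finset.sum_range_succ' (f := fun i => (if i = 0 then 0 else Acoef (m+1) (i-1)) * u^(2*i+1)) (m+2)]
    rw [if_pos rfl, zero_mul, add_zero, Finset.mul_sum]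
    refine Finset.sum_congr rfl fun i _ => ?_
    rw [if_neg i.succ_ne_zero, Nat.add_sub_cancel]
    ring
  have two_mul_sum : (2:ℝ) * ∑ i ∈ range (m+2), Acoef (m+1) i * u^(2*i+1)
      = ∑ i ∈ range (m+3), 2 * (Acoef (m+1) i * u^(2*i+1)) := by
    rw [Finset.sum_range_succ (n := m+2), Acoef_eq_zero (show m+1 < m+2 by omega),
      Finset.mul_sum]
    simp
  rw [sub_mul, shift, ext2, two_mul_sum, ← Finset.sum_sub_distrib, ← Finset.sum_sub_distrib]
  refine Finset.sum_congr rfl fun i _ => ?_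
  rw [Acoef_rec]
  ring

lemma key_s9 (m : ℕ) (θ : ℝ) :
    ∑ i ∈ range (m+1), Acoef m i * (2*Real.cos θ)^(2*i+1) = 2 * Real.cos ((2*m+1)*θ) := by
  induction m using Nat.strong_induction_on with
  | _ m ih =>
    match m with
    | 0 => simp [Acoef]
    | 1 =>
      rw [Finset.sum_range_succ, Finset.sum_range_one]
      have h3 : Real.cos (3*θ) = 4 * Real.cos θ ^3 - 3 * Real.cos θ := Real.cos_three_mul θ
      norm_num [Acoef]
      rw [h3]
      ring
    | (m+2) =>
      have h1 := ih m (by omega)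
      have h2 := ih (m+1) (by omega)
      have trig : 2 * Real.cos ((2*(m:ℝ)+5)*θ)
          = ((2*Real.cos θ)^2 - 2) * (2*Real.cos ((2*(m:ℝ)+3)*θ)) - 2*Real.cos ((2*(m:ℝ)+1)*θ) := by
        rw [show (2*(m:ℝ)+5)*θ = ((2*(m:ℝ)+3)*θ) + 2*θ by ring,
            show (2*(m:ℝ)+1)*θ = ((2*(m:ℝ)+3)*θ) - 2*θ by ring,
            Real.cos_add, Real.cos_sub, Real.cos_two_mul]
        ring
      rw [show m+2+1 = m+3 from rfl, sum_rec, show m+1+1 = m+2 from rfl, h1, h2]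
      push_cast
      rw [show (2*((m:ℝ)+1)+1)*θ = (2*(m:ℝ)+3)*θ from by ring,
          show (2*((m:ℝ)+2)+1)*θ = (2*(m:ℝ)+5)*θ from by ring, trig]

theorem stmt_9 (m : ℕ) (c d : ℝ) (hc : 0 < c)
    (hD : d ^ 2 - c ^ (2 * m + 1) < 0) :
    ∀ j : ℤ,
      (2 * Real.sqrt c *
          Real.cos ((Real.arccos (d / c ^ (((2 * m + 1 : ℕ) : ℝ) / 2)) + 2 * Real.pi * j) /
            (2 * m + 1))) ^ (2 * m + 1) -
        (∑ i ∈ Finset.range m,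
          ((-1 : ℝ) ^ (m - 1 - i) * (2 * (m : ℝ) + 1) / (2 * (i : ℝ) + 1) *
            ((m + i).choose (2 * i) : ℝ)) * c ^ (m - i) *
            (2 * Real.sqrt c *
              Real.cos ((Real.arccos (d / c ^ (((2 * m + 1 : ℕ) : ℝ) / 2)) + 2 * Real.pi * j) /
                (2 * m + 1))) ^ (2 * i + 1)) - 2 * d = 0 := by
  intro j
  set P : ℝ := c ^ (((2 * m + 1 : ℕ) : ℝ) / 2) with hPdef
  have hPpos : 0 < P := Real.rpow_pos_of_pos hc _
  have hP2 : P ^ 2 = c ^ (2 * m + 1) := by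
    rw [hPdef, ← Real.rpow_natCast (c ^ (((2 * m + 1 : ℕ) : ℝ) / 2)) 2,
      ← Real.rpow_mul hc.le]
    rw [show ((2 * m + 1 : ℕ) : ℝ) / 2 * ((2 : ℕ) : ℝ) = ((2 * m + 1 : ℕ) : ℝ) by
      push_cast; ring]
    rw [Real.rpow_natCast]
  have hdP : |d / P| ≤ 1 := by
    rw [abs_div, abs_of_pos hPpos, div_le_one hPpos]
    nlinarith [sq_abs d, abs_nonneg d]
  obtain ⟨hl, hr⟩ := abs_le.1 hdP
  have hcos : Real.cos (Real.arccos (d / P)) = d / P := Real.cos_arccos hl hr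
  set α : ℝ := Real.arccos (d / P) with hα
  set θ : ℝ := (α + 2 * Real.pi * j) / (2 * m + 1) with hθ
  have hne : (2 * (m : ℝ) + 1) ≠ 0 := by positivity
  have hnθ : (2 * (m : ℝ) + 1) * θ = α + 2 * Real.pi * j := by
    rw [hθ, mul_comm, div_mul_cancel₀ _ hne]
  have hcosn : Real.cos ((2 * (m : ℝ) + 1) * θ) = d / P := by
    rw [hnθ, show α + 2 * Real.pi * (j : ℝ) = α + (j : ℝ) * (2 * Real.pi) by ring,
      Real.cos_add_int_mul_two_pi, hcos]
  set s : ℝ := Real.sqrt c with hs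
  have hs2 : s ^ 2 = c := Real.sq_sqrt hc.le
  have hsP : s ^ (2 * m + 1) = P := by
    rw [hs, Real.sqrt_eq_rpow, hPdef, ← Real.rpow_natCast (c ^ ((1 : ℝ) / 2)) (2 * m + 1),
      ← Real.rpow_mul hc.le]
    congr 1
    push_cast; ring
  set u : ℝ := 2 * Real.cos θ with hu
  have hAmm : Acoef m m = 1 := by
    simp [Acoef, ← two_mul, Nat.choose_self, pow_mul]
    exact hne
  have hx : (2 * s * Real.cos θ) ^ (2 * m + 1) = s ^ (2 * m + 1) * u ^ (2 * m + 1) := by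
    rw [show 2 * s * Real.cos θ = s * u by rw [hu]; ring, mul_pow]
  have hterm : ∀ i ∈ range m,
      ((-1 : ℝ) ^ (m - 1 - i) * (2 * (m : ℝ) + 1) / (2 * (i : ℝ) + 1) *
        ((m + i).choose (2 * i) : ℝ)) * c ^ (m - i) * (2 * s * Real.cos θ) ^ (2 * i + 1)
      = -(s ^ (2 * m + 1) * (Acoef m i * u ^ (2 * i + 1))) := by
    intro i hi
    have him : i < m := Finset.mem_range.1 hi
    have hsgn : ((-1 : ℝ)) ^ (m + i) = -(-1 : ℝ) ^ (m - 1 - i) := by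
      rw [show m + i = (m - 1 - i) + (2 * i + 1) by omega, pow_add, pow_add, pow_mul]
      norm_num
    have hcmi : c ^ (m - i) = s ^ (2 * (m - i)) := by rw [pow_mul, hs2]
    have hxi : (2 * s * Real.cos θ) ^ (2 * i + 1) = s ^ (2 * i + 1) * u ^ (2 * i + 1) := by
      rw [show 2 * s * Real.cos θ = s * u by rw [hu]; ring, mul_pow]
    rw [hcmi, hxi, Acoef, hsgn, show 2 * m + 1 = 2 * (m - i) + (2 * i + 1) by omega, pow_add]
    ring
  rw [Finset.sum_congr rfl hterm, Finset.sum_neg_distrib, hx]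
  have hkey := key_s9 m θ
  rw [Finset.sum_range_succ] at hkey
  have : s ^ (2 * m + 1) * u ^ (2 * m + 1)
      + ∑ i ∈ range m, s ^ (2 * m + 1) * (Acoef m i * u ^ (2 * i + 1))
      = s ^ (2 * m + 1) * (2 * Real.cos ((2 * (m : ℝ) + 1) * θ)) := by
    rw [← hu] at hkey
    rw [← hkey, hAmm, one_mul, mul_add, Finset.mul_sum]
    ring
  rw [hcosn, hsP] at this
  have hfin : P * (2 * (d / P)) = 2 * d := by
    field_simp
  rw [hfin] at this
  rw [hsP]
  linarith
end

section
/- Let n ≥ 1 and let p, q be complex numbers with p·q = c ≠ 0. Then with ω = exp(2πi/n), the polynomial identity (√c)^n · Ω_n(x/√c) − (p^n + q^n) = ∏_{k=0}^{n−1} (x − p·ω^k − q·ω^{−k}) holds, where Ω_n is the n-th modified Chebyshev polynomial of the first kind. -/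
/-- The modified Chebyshev (Vieta–Lucas) polynomials, as functions on ℂ. -/
def OmegaC : ℕ → ℂ → ℂ
  | 0, _ => 2
  | 1, x => x
  | n + 2, x => x * OmegaC (n + 1) x - OmegaC n x

lemma omega_key (z : ℂ) (hz : z ≠ 0) : ∀ n, OmegaC n (z + z⁻¹) = z ^ n + (z⁻¹) ^ n
  | 0 => by simp [OmegaC]; norm_num
  | 1 => by simp [OmegaC]
  | (n + 2) => by
    rw [OmegaC, omega_key z hz (n + 1), omega_key z hz n]
    linear_combination (z ^ n + z⁻¹ ^ n) * mul_inv_cancel₀ hz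

lemma prod_sub (n : ℕ) (hn : 0 < n) {ζ : ℂ} (hζ : IsPrimitiveRoot ζ n) (a y : ℂ) :
    ∏ k ∈ Finset.range n, (y - ζ ^ k * a) = y ^ n - a ^ n := by
  have h := X_pow_sub_C_eq_prod hζ hn (rfl : a ^ n = a ^ n)
  have := congrArg (Polynomial.eval y) h
  simpa [Polynomial.eval_prod] using this.symm

theorem stmt_14 (n : ℕ) (hn : 1 ≤ n) (p q c s : ℂ) (hc : p * q = c) (hc0 : c ≠ 0)
    (hs : s ^ 2 = c) :
    ∀ x : ℂ,
      s ^ n * OmegaC n (x / s) - (p ^ n + q ^ n) =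
        ∏ k ∈ Finset.range n,
          (x - p * Complex.exp (2 * Real.pi * Complex.I / n) ^ k -
            q * Complex.exp (2 * Real.pi * Complex.I / n) ^ (-(k : ℤ))) := by
  intro x
  have hs0 : s ≠ 0 := by
    intro h; apply hc0; rw [← hs, h]; ring
  set ω : ℂ := Complex.exp (2 * Real.pi * Complex.I / n) with hω
  have hn0 : (n : ℕ) ≠ 0 := by omega
  have hprim : IsPrimitiveRoot ω n := Complex.isPrimitiveRoot_exp n hn0
  have hprim' : IsPrimitiveRoot ω⁻¹ n := hprim.inv
  have hω0 : ω ≠ 0 := hprim.ne_zero hn0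
  -- find z with z + z⁻¹ = x / s
  obtain ⟨z, hz0, hxz⟩ : ∃ z : ℂ, z ≠ 0 ∧ x = s * (z + z⁻¹) := by
    obtain ⟨w, hw⟩ := IsAlgClosed.exists_pow_nat_eq ((x / s) ^ 2 - 4) (n := 2) (by norm_num)
    have h4 : (x / s + w) * ((x / s - w)) = 4 := by
      linear_combination -hw
    have hmul : ((x / s + w) / 2) * ((x / s - w) / 2) = 1 := by
      rw [div_mul_div_comm, h4]; norm_num
    refine ⟨(x / s + w) / 2, left_ne_zero_of_mul_eq_one hmul, ?_⟩
    have hinv : ((x / s + w) / 2)⁻¹ = (x / s - w) / 2 := inv_eq_of_mul_eq_one_right hmul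
    rw [hinv]
    field_simp
    ring
  have hzz : z * z⁻¹ = 1 := mul_inv_cancel₀ hz0
  -- rewrite each factor
  have hfac : ∀ k ∈ Finset.range n,
      (x - p * ω ^ k - q * ω ^ (-(k : ℤ))) =
      (s * z - ω ^ k * p) * (s * z - (ω⁻¹) ^ k * q) / (s * z) := by
    intro k _
    have h1 : ω ^ (-(k : ℤ)) = (ω⁻¹) ^ k := by
      rw [zpow_neg, zpow_natCast, inv_pow]
    have h2 : (ω ^ k) * (ω⁻¹) ^ k = 1 := by
      rw [inv_pow, mul_inv_cancel₀ (pow_ne_zero k hω0)]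
    rw [h1, hxz, eq_div_iff (mul_ne_zero hs0 hz0)]
    linear_combination s ^ 2 * hzz - p * q * h2 + hs - hc
  rw [Finset.prod_congr rfl hfac, Finset.prod_div_distrib, Finset.prod_const,
    Finset.prod_mul_distrib, prod_sub n hn hprim p (s * z), prod_sub n hn hprim' q (s * z),
    Finset.card_range]
  have hxs : x / s = z + z⁻¹ := by rw [hxz]; field_simp
  rw [hxs, omega_key z hz0 n, eq_div_iff (pow_ne_zero n (mul_ne_zero hs0 hz0))]
  have key : p ^ n * q ^ n = s ^ (2 * n) := by
    rw [← mul_pow, hc, ← hs, ← pow_mul]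
  have hzzn : (z * z⁻¹) ^ n = 1 := by rw [hzz, one_pow]
  linear_combination s ^ (2 * n) * hzzn - key
end

section
/- Let n = 2m+1 be odd, let c, d be real parameters with p·q = c and p^n + q^n = 2d for complex p, q, and let W = p·Z_n + q·Z_n^{−1} where Z_n is the n-dimensional clock matrix. Then W satisfies the matrix identity W^n = 2d·I + ∑_{j=0}^{m−1} B_{m,j}·c^{m−j}·W^{2j+1}, with B_{m,j} = (−1)^{m−1−j}·(2m+1)/(2j+1)·binom(m+j, 2j). -/
open Finset


lemma nat_id (m j : ℕ) (h : j < m) :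
    (2*m+1) * Nat.choose (m+j) (2*j) =
      (2*j+1) * (Nat.choose (m+j+1) (m-j) + Nat.choose (m+j) (m-j-1)) := by
  have h1 : Nat.choose (m+j+1) (m-j) = Nat.choose (m+j+1) (2*j+1) := by
    have : m - j = (m+j+1) - (2*j+1) := by omega
    rw [this, Nat.choose_symm (by omega)]
  have h2 : Nat.choose (m+j) (m-j-1) = Nat.choose (m+j) (2*j+1) := by
    have : m - j - 1 = (m+j) - (2*j+1) := by omega
    rw [this, Nat.choose_symm (by omega)]
  have h3 : (2*j+1) * Nat.choose (m+j+1) (2*j+1) = (m+j+1) * Nat.choose (m+j) (2*j) := by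
    have := Nat.add_one_mul_choose_eq (m+j) (2*j)
    ring_nf at this ⊢
    omega
  have h4 : (2*j+1) * Nat.choose (m+j) (2*j+1) = (m+j) * Nat.choose (m+j-1) (2*j) := by
    have := Nat.add_one_mul_choose_eq (m+j-1) (2*j)
    have e : m+j-1+1 = m+j := by omega
    rw [e] at this
    ring_nf at this ⊢
    omega
  have h5 : (m-j) * Nat.choose (m+j) (2*j) = (m+j) * Nat.choose (m+j-1) (2*j) := by
    have s1 : Nat.choose (m+j) (2*j) = Nat.choose (m+j) (m-j) := by
      have : m - j = (m+j) - (2*j) := by omega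
      rw [this, Nat.choose_symm (by omega)]
    have s2 : Nat.choose (m+j-1) (2*j) = Nat.choose (m+j-1) (m-j-1) := by
      have : m - j - 1 = (m+j-1) - (2*j) := by omega
      rw [this, Nat.choose_symm (by omega)]
    have := Nat.add_one_mul_choose_eq (m+j-1) (m-j-1)
    have e : m+j-1+1 = m+j := by omega
    have e2 : m-j-1+1 = m-j := by omega
    rw [e, e2] at this
    rw [s1, s2]
    ring_nf at this ⊢
    omega
  have key : (2*m+1) * Nat.choose (m+j) (2*j)
      = (m+j+1) * Nat.choose (m+j) (2*j) + (m-j) * Nat.choose (m+j) (2*j) := by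
    have e : 2*m+1 = (m+j+1) + (m-j) := by omega
    rw [e, Nat.add_mul]
  rw [key, h1, h2, Nat.mul_add, h3, h4, h5]


noncomputable def Fpoly (a b : ℂ) (k : ℕ) : ℂ :=
  ∑ i ∈ Finset.range k, (-1:ℂ)^i * ((k-1-i).choose i : ℂ) * (a*b)^i * (a+b)^(k-1-2*i)

lemma Fpoly_zero (a b : ℂ) : Fpoly a b 0 = 0 := by simp [Fpoly]

lemma Fpoly_one (a b : ℂ) : Fpoly a b 1 = 1 := by simp [Fpoly]

lemma Fpoly_two (a b : ℂ) : Fpoly a b 2 = a + b := by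
  simp [Fpoly, Finset.sum_range_succ]

lemma Fpoly_rec (a b : ℂ) (k : ℕ) :
    Fpoly a b (k+2) = (a+b) * Fpoly a b (k+1) - (a*b) * Fpoly a b k := by
  rw [Fpoly, Fpoly, Fpoly, Finset.sum_range_succ' (n := k+1),
    Finset.mul_sum, Finset.mul_sum, Finset.sum_range_succ' (f := fun i =>
      (a+b) * ((-1:ℂ)^i * ((k+1-1-i).choose i : ℂ) * (a*b)^i * (a+b)^(k+1-1-2*i))) (n := k)]
  have h0 : ((-1:ℂ)^0 * ((k+2-1-0).choose 0 : ℂ) * (a*b)^0 * (a+b)^(k+2-1-2*0))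
      = (a+b) * ((-1:ℂ)^0 * ((k+1-1-0).choose 0 : ℂ) * (a*b)^0 * (a+b)^(k+1-1-2*0)) := by
    simp [pow_succ]
    ring
  -- last term of LHS range (k+2) : handled inside sum_range_succ'? we used sum_range_succ' on k+1 so
  -- LHS = ∑_{i<k+1} t(i+1) + t 0
  rw [h0]
  have main : ∑ i ∈ Finset.range (k+1),
      ((-1:ℂ)^(i+1) * ((k+2-1-(i+1)).choose (i+1) : ℂ) * (a*b)^(i+1) * (a+b)^(k+2-1-2*(i+1)))
      = (∑ i ∈ Finset.range k,
          (a+b) * ((-1:ℂ)^(i+1) * ((k+1-1-(i+1)).choose (i+1) : ℂ) * (a*b)^(i+1) * (a+b)^(k+1-1-2*(i+1))))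
        - (a*b) * ∑ i ∈ Finset.range k,
            ((-1:ℂ)^i * ((k-1-i).choose i : ℂ) * (a*b)^i * (a+b)^(k-1-2*i)) := by
    rw [Finset.sum_range_succ, Finset.mul_sum, ← Finset.sum_sub_distrib]
    have last : ((-1:ℂ)^(k+1) * ((k+2-1-(k+1)).choose (k+1) : ℂ) * (a*b)^(k+1) * (a+b)^(k+2-1-2*(k+1))) = 0 := by
      have : k+2-1-(k+1) = 0 := by omega
      rw [this]
      simp
    rw [last, add_zero]
    apply Finset.sum_congr rfl
    intro i hi
    simp only [Finset.mem_range] at hi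
    have pascal : ((k+2-1-(i+1)).choose (i+1)) = ((k+1-1-(i+1)).choose (i+1)) + ((k-1-i).choose i) := by
      have e1 : k+2-1-(i+1) = (k-1-i)+1 := by omega
      have e2 : k+1-1-(i+1) = k-1-i := by omega
      rw [e1, e2, Nat.choose_succ_succ', Nat.add_comm]
    rcases Nat.lt_trichotomy k (2*i+2) with hc | hc | hc
    · -- k ≤ 2i+1 ; subcases k = 2i+1 or k ≤ 2i
      have z1 : ((k+1-1-(i+1)).choose (i+1)) = 0 := by
        apply Nat.choose_eq_zero_of_lt; omega
      by_cases hk : k = 2*i+1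
      · subst hk
        have e5 : 2*i+1+2-1-2*(i+1) = 0 := by omega
        have e6 : 2*i+1-1-2*i = 0 := by omega
        rw [pascal, z1, e5, e6]
        push_cast
        ring
      · have z2 : ((k-1-i).choose i) = 0 := by
          apply Nat.choose_eq_zero_of_lt; omega
        rw [pascal, z1, z2]
        simp
    · -- impossible parity? no: k = 2i+2 is fine, belongs to next case
      have e3 : k+1-1-2*(i+1) + 1 = k+2-1-2*(i+1) := by omega
      have e4 : k-1-2*i = k+2-1-2*(i+1) := by omega
      rw [pascal, e4, ← e3, pow_succ]
      push_cast
      ring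
    · have e3 : k+1-1-2*(i+1) + 1 = k+2-1-2*(i+1) := by omega
      have e4 : k-1-2*i = k+2-1-2*(i+1) := by omega
      rw [pascal, e4, ← e3, pow_succ]
      push_cast
      ring
  rw [main, Finset.mul_sum]
  ring

lemma Fpoly_three (a b : ℂ) : Fpoly a b 3 = (a+b)^2 - a*b := by
  rw [show 3 = 1+2 from rfl, Fpoly_rec, Fpoly_two, Fpoly_one]
  ring

lemma powsum_eq (a b : ℂ) : ∀ n : ℕ,
    a^(n+1) + b^(n+1) = Fpoly a b (n+2) - (a*b) * Fpoly a b n := by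
  have key : ∀ n : ℕ,
      (a^(n+1) + b^(n+1) = Fpoly a b (n+2) - (a*b) * Fpoly a b n) ∧
      (a^(n+2) + b^(n+2) = Fpoly a b (n+3) - (a*b) * Fpoly a b (n+1)) := by
    intro n
    induction n with
    | zero =>
      constructor
      · rw [Fpoly_two, Fpoly_zero]; ring
      · rw [Fpoly_three, Fpoly_one]; ring
    | succ k ih =>
      obtain ⟨ih1, ih2⟩ := ih
      refine ⟨ih2, ?_⟩
      show a^(k+3) + b^(k+3) = Fpoly a b (k+4) - (a*b) * Fpoly a b (k+2)
      have e1 : Fpoly a b (k+4) = (a+b) * Fpoly a b (k+3) - (a*b) * Fpoly a b (k+2) :=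
        Fpoly_rec a b (k+2)
      have e2 : Fpoly a b (k+2) = (a+b) * Fpoly a b (k+1) - (a*b) * Fpoly a b k :=
        Fpoly_rec a b k
      linear_combination -e1 + (a+b)*ih2 + (a*b)*e2 - (a*b)*ih1
  exact fun n => (key n).1

lemma F_even_top (m : ℕ) (a b : ℂ) :
    Fpoly a b (2*m+2) = (a+b)^(2*m+1) +
      ∑ j ∈ Finset.range m,
        (-1:ℂ)^(m-j) * ((m+j+1).choose (m-j) : ℂ) * (a*b)^(m-j) * (a+b)^(2*j+1) := by
  rw [Fpoly,
    ← Finset.sum_subset (Finset.range_subset_range.mpr (show m+1 ≤ 2*m+2 by omega))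
      (by
        intro i _ hi
        simp only [Finset.mem_range, not_lt] at hi
        have : (2*m+2-1-i).choose i = 0 := Nat.choose_eq_zero_of_lt (by omega)
        rw [this]
        simp),
    ← Finset.sum_range_reflect, Finset.sum_range_succ]
  have last : (-1:ℂ)^(m+1-1-m) * ((2*m+2-1-(m+1-1-m)).choose (m+1-1-m) : ℂ)
      * (a*b)^(m+1-1-m) * (a+b)^(2*m+2-1-2*(m+1-1-m)) = (a+b)^(2*m+1) := by
    have e : m+1-1-m = 0 := by omega
    rw [e]
    simp
  rw [last, add_comm]
  congr 1
  apply Finset.sum_congr rfl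
  intro j hj
  simp only [Finset.mem_range] at hj
  have e1 : m+1-1-j = m-j := by omega
  have e2 : 2*m+2-1-(m-j) = m+j+1 := by omega
  have e3 : 2*m+2-1-2*(m-j) = 2*j+1 := by omega
  rw [e1, e2, e3]

lemma F_odd_top (m : ℕ) (a b : ℂ) :
    Fpoly a b (2*m) =
      ∑ j ∈ Finset.range m,
        (-1:ℂ)^(m-1-j) * ((m+j).choose (m-1-j) : ℂ) * (a*b)^(m-1-j) * (a+b)^(2*j+1) := by
  rw [Fpoly,
    ← Finset.sum_subset (Finset.range_subset_range.mpr (show m ≤ 2*m by omega))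
      (by
        intro i hi2 hi
        simp only [Finset.mem_range, not_lt] at hi hi2
        have : (2*m-1-i).choose i = 0 := Nat.choose_eq_zero_of_lt (by omega)
        rw [this]
        simp),
    ← Finset.sum_range_reflect]
  apply Finset.sum_congr rfl
  intro j hj
  simp only [Finset.mem_range] at hj
  have e2 : 2*m-1-(m-1-j) = m+j := by omega
  have e3 : 2*m-1-2*(m-1-j) = 2*j+1 := by omega
  rw [e2, e3]

lemma scalar_id (m : ℕ) (a b : ℂ) :
    (a+b)^(2*m+1) = (a^(2*m+1) + b^(2*m+1)) +
      ∑ j ∈ Finset.range m,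
        ((-1:ℂ)^(m-1-j) * (2*(m:ℂ)+1) / (2*(j:ℂ)+1) * ((m+j).choose (2*j) : ℂ))
          * (a*b)^(m-j) * (a+b)^(2*j+1) := by
  have hG := powsum_eq a b (2*m)
  rw [hG, F_even_top, F_odd_top, Finset.mul_sum]
  have main : ∀ j ∈ Finset.range m,
      ((-1:ℂ)^(m-j) * ((m+j+1).choose (m-j) : ℂ) * (a*b)^(m-j) * (a+b)^(2*j+1))
      - a*b * ((-1:ℂ)^(m-1-j) * ((m+j).choose (m-1-j) : ℂ) * (a*b)^(m-1-j) * (a+b)^(2*j+1))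
      + ((-1:ℂ)^(m-1-j) * (2*(m:ℂ)+1) / (2*(j:ℂ)+1) * ((m+j).choose (2*j) : ℂ))
          * (a*b)^(m-j) * (a+b)^(2*j+1) = 0 := by
    intro j hj
    simp only [Finset.mem_range] at hj
    have hnat := nat_id m j hj
    have hcast : ((2*m+1 : ℕ) : ℂ) * (((m+j).choose (2*j) : ℕ) : ℂ)
        = ((2*j+1 : ℕ) : ℂ) * ((((m+j+1).choose (m-j) : ℕ) : ℂ) + (((m+j).choose (m-j-1) : ℕ) : ℂ)) := by
      push_cast
      exact_mod_cast congrArg (Nat.cast : ℕ → ℂ) hnat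
    have hj1 : (2*(j:ℂ)+1) ≠ 0 := by
      have : ((2*j+1 : ℕ) : ℂ) ≠ 0 := Nat.cast_ne_zero.mpr (by omega)
      push_cast at this
      convert this using 2
    have hBC : (-1:ℂ)^(m-1-j) * (2*(m:ℂ)+1) / (2*(j:ℂ)+1) * ((m+j).choose (2*j) : ℂ)
        = (-1:ℂ)^(m-1-j) * (((m+j+1).choose (m-j) : ℂ) + ((m+j).choose (m-j-1) : ℂ)) := by
      rw [div_mul_eq_mul_div, div_eq_iff hj1]
      push_cast at hcast ⊢
      linear_combination ((-1:ℂ)^(m-1-j)) * hcast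
    rw [hBC]
    have epow : (a*b)^(m-j) = (a*b)^(m-1-j) * (a*b) := by
      rw [← pow_succ, show m-1-j+1 = m-j from by omega]
    have esign : (-1:ℂ)^(m-j) = -(-1:ℂ)^(m-1-j) := by
      rw [show m-j = (m-1-j)+1 from by omega, pow_succ]; ring
    have echoose : (((m+j).choose (m-j-1) : ℕ) : ℂ) = (((m+j).choose (m-1-j) : ℕ) : ℂ) := by
      rw [show m-j-1 = m-1-j from by omega]
    rw [esign, epow, echoose]
    ring
  have sumkey := Finset.sum_eq_zero main
  rw [Finset.sum_add_distrib, Finset.sum_sub_distrib] at sumkey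
  linear_combination -sumkey

theorem stmt_16 (m : ℕ) (c d : ℝ) (p q : ℂ)
    (hc : p * q = (c : ℂ)) (hd : p ^ (2 * m + 1) + q ^ (2 * m + 1) = 2 * (d : ℂ)) :
    let n : ℕ := 2 * m + 1
    let ω : ℂ := Complex.exp (2 * Real.pi * Complex.I / n)
    let Z : Matrix (Fin n) (Fin n) ℂ := Matrix.diagonal fun j => ω ^ (j : ℕ)
    let W : Matrix (Fin n) (Fin n) ℂ := p • Z + q • Z⁻¹
    W ^ n =
      (2 * (d : ℂ)) • (1 : Matrix (Fin n) (Fin n) ℂ) +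
        ∑ j ∈ Finset.range m,
          (((-1 : ℂ) ^ (m - 1 - j) * (2 * (m : ℂ) + 1) / (2 * (j : ℂ) + 1) *
            ((m + j).choose (2 * j) : ℂ)) * (c : ℂ) ^ (m - j)) • W ^ (2 * j + 1) := by
  intro n ω Z W
  have hω : ω ≠ 0 := Complex.exp_ne_zero _
  have hn0 : ((n : ℕ) : ℂ) ≠ 0 := Nat.cast_ne_zero.mpr (by simp [n])
  have hωn : ω ^ n = 1 := by
    show Complex.exp (2 * Real.pi * Complex.I / n) ^ n = 1
    rw [← Complex.exp_nat_mul, mul_div_cancel₀ _ hn0, Complex.exp_two_pi_mul_I]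
  set w : Fin n → ℂ := fun j => p * ω ^ (j:ℕ) + q * (ω ^ (j:ℕ))⁻¹ with hw
  have hZinv : Z⁻¹ = Matrix.diagonal (fun j : Fin n => (ω ^ (j:ℕ))⁻¹) := by
    apply Matrix.inv_eq_right_inv
    rw [Matrix.diagonal_mul_diagonal, ← Matrix.diagonal_one]
    apply congrArg Matrix.diagonal
    funext j
    exact mul_inv_cancel₀ (pow_ne_zero _ hω)
  have hW : W = Matrix.diagonal w := by
    show p • Z + q • Z⁻¹ = _
    rw [hZinv, show Z = Matrix.diagonal fun j : Fin n => ω ^ (j:ℕ) from rfl,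
      ← Matrix.diagonal_smul, ← Matrix.diagonal_smul, Matrix.diagonal_add]
    apply congrArg Matrix.diagonal
    funext j
    simp [hw]
  have hWpow : ∀ k : ℕ, W ^ k = Matrix.diagonal (fun j => w j ^ k) := by
    intro k
    rw [hW, Matrix.diagonal_pow]
    rfl
  rw [hWpow n]
  have hrhs : (2 * (d : ℂ)) • (1 : Matrix (Fin n) (Fin n) ℂ) +
        ∑ j ∈ Finset.range m,
          (((-1 : ℂ) ^ (m - 1 - j) * (2 * (m : ℂ) + 1) / (2 * (j : ℂ) + 1) *
            ((m + j).choose (2 * j) : ℂ)) * (c : ℂ) ^ (m - j)) • W ^ (2 * j + 1)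
      = Matrix.diagonal (fun k : Fin n => 2 * (d : ℂ) +
          ∑ j ∈ Finset.range m,
            (((-1 : ℂ) ^ (m - 1 - j) * (2 * (m : ℂ) + 1) / (2 * (j : ℂ) + 1) *
              ((m + j).choose (2 * j) : ℂ)) * (c : ℂ) ^ (m - j)) * w k ^ (2 * j + 1)) := by
    rw [← Matrix.diagonal_one, ← Matrix.diagonal_smul]
    have : ∀ j ∈ Finset.range m,
        (((-1 : ℂ) ^ (m - 1 - j) * (2 * (m : ℂ) + 1) / (2 * (j : ℂ) + 1) *
            ((m + j).choose (2 * j) : ℂ)) * (c : ℂ) ^ (m - j)) • W ^ (2 * j + 1)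
        = Matrix.diagonal (fun k : Fin n =>
            (((-1 : ℂ) ^ (m - 1 - j) * (2 * (m : ℂ) + 1) / (2 * (j : ℂ) + 1) *
              ((m + j).choose (2 * j) : ℂ)) * (c : ℂ) ^ (m - j)) * w k ^ (2 * j + 1)) := by
      intro j _
      rw [hWpow, ← Matrix.diagonal_smul]
      rfl
    rw [Finset.sum_congr rfl this]
    have dsum : (∑ x ∈ Finset.range m, Matrix.diagonal (fun k : Fin n =>
          ((-1:ℂ) ^ (m-1-x) * (2*(m:ℂ)+1) / (2*(x:ℂ)+1) * ((m+x).choose (2*x) : ℂ) * (c:ℂ)^(m-x)) * w k ^ (2*x+1)))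
        = Matrix.diagonal (fun k : Fin n => ∑ x ∈ Finset.range m,
          ((-1:ℂ) ^ (m-1-x) * (2*(m:ℂ)+1) / (2*(x:ℂ)+1) * ((m+x).choose (2*x) : ℂ) * (c:ℂ)^(m-x)) * w k ^ (2*x+1)) := by
      ext i j
      by_cases h : i = j
      · subst h
        simp [Matrix.sum_apply, Matrix.diagonal_apply]
      · simp [Matrix.sum_apply, Matrix.diagonal_apply, h]
    rw [dsum, Matrix.diagonal_add]
    apply congrArg Matrix.diagonal
    funext k
    simp
  rw [hrhs]
  apply congrArg Matrix.diagonal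
  funext k
  have key := scalar_id m (p * ω ^ (k:ℕ)) (q * (ω ^ (k:ℕ))⁻¹)
  have hab : (p * ω ^ (k:ℕ)) * (q * (ω ^ (k:ℕ))⁻¹) = (c : ℂ) := by
    field_simp
    linear_combination hc
  have hpow : (p * ω ^ (k:ℕ))^(2*m+1) + (q * (ω ^ (k:ℕ))⁻¹)^(2*m+1) = 2 * (d : ℂ) := by
    have h1 : (ω ^ (k:ℕ))^(2*m+1) = 1 := by
      rw [← pow_mul, mul_comm (k:ℕ), pow_mul]
      show (ω ^ n) ^ (k:ℕ) = 1
      rw [hωn, one_pow]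
    rw [mul_pow, mul_pow, h1, inv_pow, h1]
    simpa using hd
  rw [hab, hpow] at key
  exact key
end

section
/- Let n = 2m+1 be odd, p·q = c, p^n + q^n = 2d, and X = p·X_n + q·X_n^{−1} with X_n the cyclic shift matrix. Then C_{n,c,d}(X) = 0, i.e., X^n − ∑_{j=0}^{m−1} B_{m,j}·c^{m−j}·X^{2j+1} − 2d·I = 0, where B_{m,j} = (−1)^{m−1−j}·(2m+1)/(2j+1)·binom(m+j,2j). -/
open Finset

def Anat (m j : ℕ) : ℕ := (m+j+1).choose (2*j+1) + (m+j).choose (2*j+1)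
lemma Anat_zero (m : ℕ) : Anat m 0 = 2*m+1 := by
  simp [Anat, Nat.choose_one_right]; omega

lemma Anat_self (m : ℕ) : Anat m m = 1 := by
  unfold Anat
  rw [show m+m+1 = 2*m+1 by omega, show m+m = 2*m by omega,
    Nat.choose_self, Nat.choose_eq_zero_of_lt (by omega)]

lemma Anat_eq_zero {m j : ℕ} (h : m < j) : Anat m j = 0 := by
  unfold Anat
  rw [Nat.choose_eq_zero_of_lt (by omega), Nat.choose_eq_zero_of_lt (by omega)]

lemma Anat_rec (m j : ℕ) :
    Anat (m+2) (j+1) + Anat m (j+1) = Anat (m+1) j + 2 * Anat (m+1) (j+1) := by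
  unfold Anat
  have h1 : (m+j+2).choose (2*j+1) = (m+j+1).choose (2*j) + (m+j+1).choose (2*j+1) :=
    Nat.choose_succ_succ (m+j+1) (2*j)
  have h2 : (m+j+2).choose (2*j+2) = (m+j+1).choose (2*j+1) + (m+j+1).choose (2*j+2) :=
    Nat.choose_succ_succ (m+j+1) (2*j+1)
  have h3 : (m+j+2).choose (2*j+3) = (m+j+1).choose (2*j+2) + (m+j+1).choose (2*j+3) :=
    Nat.choose_succ_succ (m+j+1) (2*j+2)
  have h4 : (m+j+3).choose (2*j+3) = (m+j+2).choose (2*j+2) + (m+j+2).choose (2*j+3) :=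
    Nat.choose_succ_succ (m+j+2) (2*j+2)
  have h5 : (m+j+4).choose (2*j+3) = (m+j+3).choose (2*j+2) + (m+j+3).choose (2*j+3) :=
    Nat.choose_succ_succ (m+j+3) (2*j+2)
  have h6 : (m+j+3).choose (2*j+2) = (m+j+2).choose (2*j+1) + (m+j+2).choose (2*j+2) :=
    Nat.choose_succ_succ (m+j+2) (2*j+1)
  have e1 : m+2+(j+1)+1 = m+j+4 := by omega
  have e2 : m+2+(j+1) = m+j+3 := by omega
  have e3 : m+(j+1)+1 = m+j+2 := by omega
  have e4 : m+(j+1) = m+j+1 := by omega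
  have e5 : m+1+j+1 = m+j+2 := by omega
  have e6 : m+1+j = m+j+1 := by omega
  have e7 : m+1+(j+1)+1 = m+j+3 := by omega
  have e8 : m+1+(j+1) = m+j+2 := by omega
  have e9 : 2*(j+1)+1 = 2*j+3 := by omega
  rw [e1, e2, e3, e4, e5, e6, e7, e8, e9]
  omega

-- relation to the fractional coefficient
lemma Anat_mul (m j : ℕ) :
    (2*j+1) * Anat m j = (2*m+1) * (m+j).choose (2*j) := by
  unfold Anat
  have h1 : (m+j+1) * (m+j).choose (2*j) = (m+j+1).choose (2*j+1) * (2*j+1) :=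
    Nat.add_one_mul_choose_eq (m+j) (2*j)
  have h2 : (m+j).choose (2*j+1) * (2*j+1) = (m+j).choose (2*j) * (m+j - 2*j) :=
    Nat.choose_succ_right_eq (m+j) (2*j)
  rcases le_or_gt j m with h | h
  · have : m+j-2*j = m-j := by omega
    rw [this] at h2
    have : m - j + (m+j+1) = 2*m+1 := by omega
    nlinarith [h1, h2]
  · rw [Nat.choose_eq_zero_of_lt (show m+j < 2*j by omega),
      Nat.choose_eq_zero_of_lt (show m+j+1 < 2*j+1 by omega),
      Nat.choose_eq_zero_of_lt (show m+j < 2*j+1 by omega)]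
    simp

def Fc {R : Type*} [CommRing R] (v w : R) (m j : ℕ) : R :=
  (((-1)^(m-j) * Anat m j : ℤ) : R) * v^(m-j) * w^(2*j+1)

lemma Fc_top {R : Type*} [CommRing R] (v w : R) {m j : ℕ} (h : m < j) : Fc v w m j = 0 := by
  simp [Fc, Anat_eq_zero h]

lemma Fc_head {R : Type*} [CommRing R] (v w : R) (k : ℕ) :
    Fc v w (k+2) 0 = -(2*v*Fc v w (k+1) 0) - v^2 * Fc v w k 0 := by
  unfold Fc
  simp only [Nat.sub_zero]
  rw [Anat_zero, Anat_zero, Anat_zero]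
  push_cast
  ring

lemma Fc_step {R : Type*} [CommRing R] (v w : R) (k j : ℕ) :
    Fc v w (k+2) (j+1) = w^2 * Fc v w (k+1) j - 2*v*Fc v w (k+1) (j+1) - v^2 * Fc v w k (j+1) := by
  rcases lt_or_ge (j+1) (k+1) with h | h
  · obtain ⟨e, rfl⟩ : ∃ e, k = j+1+e := ⟨k-(j+1), by omega⟩
    unfold Fc
    rw [show (j+1+e+2) - (j+1) = e+2 by omega, show (j+1+e+1) - j = e+2 by omega,
        show (j+1+e+1) - (j+1) = e+1 by omega, show (j+1+e) - (j+1) = e by omega]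
    have hr := congrArg (fun t : ℕ => ((t : ℤ) : R)) (Anat_rec (j+1+e) j)
    push_cast at hr ⊢
    linear_combination ((-1:R)^e * v^(e+2) * w^(2*j+3)) * hr
  · have hj : j = k ∨ k + 1 ≤ j := by omega
    rcases hj with rfl | h2
    · unfold Fc
      rw [show (j+2) - (j+1) = 1 by omega, show (j+1) - j = 1 by omega,
          show (j+1) - (j+1) = 0 by omega, show j - (j+1) = 0 by omega]
      have hr := Anat_rec j j
      rw [Anat_eq_zero (show j < j+1 by omega)] at hr
      have hr' := congrArg (fun t : ℕ => ((t : ℤ) : R)) hr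
      push_cast at hr' ⊢
      rw [Anat_eq_zero (show j < j+1 by omega)]
      push_cast
      linear_combination (-(v * w^(2*j+3))) * hr'
    · -- j ≥ k+1; combined with j+1 ≥ k+1 means j = k+1 needed? here any j ≥ k+1:
      rcases eq_or_lt_of_le h2 with rfl | h3
      · unfold Fc
        rw [Anat_self, Anat_self, Anat_eq_zero (show k+1 < k+2 by omega),
            Anat_eq_zero (show k < k+2 by omega),
            show (k+2) - (k+2) = 0 by omega, show (k+1) - (k+1) = 0 by omega]
        push_cast
        ring
      · rw [Fc_top v w (show k+2 < j+1 by omega), Fc_top v w (show k+1 < j by omega),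
            Fc_top v w (show k+1 < j+1 by omega), Fc_top v w (show k < j+1 by omega)]
        ring

lemma key_s19 {R : Type*} [CommRing R] (m : ℕ) (x y : R) :
    x^(2*m+1) + y^(2*m+1) = ∑ j ∈ range (m+1), Fc (x*y) (x+y) m j := by
  induction m using Nat.strong_induction_on with
  | _ m ih =>
    match m with
    | 0 => norm_num [Fc, Anat_self]
    | 1 =>
      rw [Finset.sum_range_succ, Finset.sum_range_succ, Finset.sum_range_zero]
      unfold Fc
      rw [Anat_self]
      rw [show Anat 1 0 = 3 by decide]
      push_cast
      ring
    | (k+2) =>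
      have ih1 := ih (k+1) (by omega)
      have ih0 := ih k (by omega)
      have hx : x^(2*(k+2)+1) + y^(2*(k+2)+1)
          = ((x+y)^2 - 2*(x*y)) * (x^(2*(k+1)+1) + y^(2*(k+1)+1))
            - (x*y)^2 * (x^(2*k+1) + y^(2*k+1)) := by ring
      rw [hx, ih1, ih0]
      set v := x*y with hv
      set w := x+y with hw
      -- pad the k-sum
      have pad0 : ∑ j ∈ range (k+2), Fc v w k j = ∑ j ∈ range (k+1), Fc v w k j := by
        rw [Finset.sum_range_succ, Fc_top v w (show k < k+1 by omega), add_zero]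
      rw [← pad0]
      -- RHS: peel j = 0
      conv_rhs => rw [Finset.sum_range_succ' _ (k+2)]
      have h2v : ∑ j ∈ range (k+2), Fc v w (k+1) j
          = ∑ j ∈ range (k+2), Fc v w (k+1) (j+1) + Fc v w (k+1) 0 := by
        rw [Finset.sum_range_succ' _ (k+1), Finset.sum_range_succ _ (k+1),
          Fc_top v w (show k+1 < k+2 by omega), add_zero]
      have hvv : ∑ j ∈ range (k+2), Fc v w k j
          = ∑ j ∈ range (k+2), Fc v w k (j+1) + Fc v w k 0 := by
        rw [Finset.sum_range_succ' _ (k+1), Finset.sum_range_succ _ (k+1),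
          Fc_top v w (show k < k+2 by omega), add_zero]
      have hterm : ∑ j ∈ range (k+2), Fc v w (k+2) (j+1)
          = ∑ j ∈ range (k+2), (w^2 * Fc v w (k+1) j - 2*v*Fc v w (k+1) (j+1)
              - v^2 * Fc v w k (j+1)) :=
        Finset.sum_congr rfl fun j _ => Fc_step v w k j
      rw [hterm, Fc_head v w k, Finset.sum_sub_distrib, Finset.sum_sub_distrib,
        ← Finset.mul_sum, ← Finset.mul_sum, ← Finset.mul_sum, h2v, hvv]
      ring

lemma shift_pow (n : ℕ) (hn : 0 < n) (k : ℕ) :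
    (Matrix.of fun i j : Fin n => if (i:ℕ) = ((j:ℕ)+1) % n then (1:ℂ) else 0)^k
      = Matrix.of fun i j : Fin n => if (i:ℕ) = ((j:ℕ)+k) % n then 1 else 0 := by
  induction k with
  | zero =>
    ext i j
    simp [Matrix.one_apply, Nat.mod_eq_of_lt j.isLt, Fin.ext_iff]
  | succ k ih =>
    rw [pow_succ, ih]
    ext i j
    rw [Matrix.mul_apply]
    simp only [Matrix.of_apply]
    have hcond : ∀ l : Fin n, ((l:ℕ) = ((j:ℕ)+1) % n) ↔ l = ⟨((j:ℕ)+1) % n, Nat.mod_lt _ hn⟩ :=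
      fun l => ⟨fun h => Fin.ext h, fun h => by rw [h]⟩
    simp only [hcond, mul_ite, mul_one, mul_zero]
    rw [Finset.sum_ite_eq' Finset.univ _ (fun l : Fin n => if (i:ℕ) = ((l:ℕ)+k) % n then (1:ℂ) else 0)]
    simp only [Finset.mem_univ, if_true]
    rw [Nat.mod_add_mod, show (j:ℕ)+1+k = (j:ℕ)+(k+1) by omega]

lemma shift_pow_n (n : ℕ) (hn : 0 < n) :
    (Matrix.of fun i j : Fin n => if (i:ℕ) = ((j:ℕ)+1) % n then (1:ℂ) else 0)^n = 1 := by
  rw [shift_pow n hn n]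
  ext i j
  simp [Matrix.one_apply, Nat.add_mod_right, Nat.mod_eq_of_lt j.isLt, Fin.ext_iff]

theorem stmt_19 (m : ℕ) (c d : ℝ) (p q : ℂ)
    (hc : p * q = (c : ℂ)) (hd : p ^ (2 * m + 1) + q ^ (2 * m + 1) = 2 * (d : ℂ)) :
    let n : ℕ := 2 * m + 1
    let S : Matrix (Fin n) (Fin n) ℂ :=
      Matrix.of fun i j => if (i : ℕ) = ((j : ℕ) + 1) % n then 1 else 0
    let X : Matrix (Fin n) (Fin n) ℂ := p • S + q • S⁻¹
    X ^ n -
        (∑ j ∈ Finset.range m,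
          (((-1 : ℂ) ^ (m - 1 - j) * (2 * (m : ℂ) + 1) / (2 * (j : ℂ) + 1) *
            ((m + j).choose (2 * j) : ℂ)) * (c : ℂ) ^ (m - j)) • X ^ (2 * j + 1)) -
        (2 * (d : ℂ)) • (1 : Matrix (Fin n) (Fin n) ℂ) = 0 := by
  intro n S X
  have hn : 0 < n := by omega
  have hSn : S ^ n = 1 := shift_pow_n n hn
  have hSinv : S⁻¹ = S ^ (2*m) := by
    apply Matrix.inv_eq_right_inv
    rw [← pow_succ']
    exact hSn
  set R₀ := Algebra.adjoin ℂ ({S} : Set (Matrix (Fin n) (Fin n) ℂ)) with hR₀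
  letI : CommRing R₀ :=
    Algebra.adjoinCommRingOfComm ℂ (by
      rintro a ha b hb
      rw [Set.mem_singleton_iff] at ha hb
      subst ha; subst hb; rfl)
  have hmem : S ∈ R₀ := Algebra.subset_adjoin rfl
  set s0 : R₀ := ⟨S, hmem⟩ with hs0def
  have hvs : (Subalgebra.val R₀) s0 = S := rfl
  have hs0 : s0 ^ (2*m+1) = 1 := by
    apply Subtype.ext
    simp only [SubmonoidClass.coe_pow, OneMemClass.coe_one]
    exact hSn
  set x : R₀ := algebraMap ℂ R₀ p * s0 with hxdef
  set y : R₀ := algebraMap ℂ R₀ q * s0 ^ (2*m) with hydef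
  have hxy : x * y = algebraMap ℂ R₀ (c : ℂ) := by
    have h1 : x * y = algebraMap ℂ R₀ (p*q) * s0 ^ (2*m+1) := by
      rw [map_mul, hxdef, hydef]; ring
    rw [h1, hs0, mul_one, hc]
  have hkey := key_s19 m x y
  rw [hxy] at hkey
  have hsum : x ^ (2*m+1) + y ^ (2*m+1) = algebraMap ℂ R₀ (2*(d:ℂ)) := by
    rw [hxdef, hydef, mul_pow, mul_pow, ← pow_mul,
      show 2*m*(2*m+1) = (2*m+1)*(2*m) by ring, pow_mul, hs0, one_pow, mul_one, mul_one,
      ← map_pow, ← map_pow, ← RingHom.map_add, hd]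
  rw [hsum] at hkey
  have hstep : ∀ j, Fc (algebraMap ℂ R₀ (c:ℂ)) (x+y) m j
      = algebraMap ℂ R₀ ((((-1)^(m-j) * Anat m j : ℤ) : ℂ) * (c:ℂ)^(m-j)) * (x+y)^(2*j+1) := by
    intro j
    unfold Fc
    rw [map_mul, ← map_intCast (algebraMap ℂ R₀) ((-1)^(m-j) * Anat m j : ℤ), ← map_pow]
  rw [Finset.sum_congr rfl (fun j _ => hstep j)] at hkey
  -- the image of x + y is X
  have hVw : (Subalgebra.val R₀) (x + y) = X := by
    rw [map_add, hxdef, hydef, map_mul, map_mul, map_pow, AlgHom.commutes, AlgHom.commutes, hvs]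
    show _ = p • S + q • S⁻¹
    rw [hSinv, Algebra.smul_def, Algebra.smul_def]
  -- map the key identity to matrices
  have hM : (2*(d:ℂ)) • (1 : Matrix (Fin n) (Fin n) ℂ)
      = ∑ j ∈ Finset.range (m+1),
          (((((-1)^(m-j) * Anat m j : ℤ) : ℂ) * (c:ℂ)^(m-j)) • X^(2*j+1)) := by
    have h2 := congrArg (Subalgebra.val R₀) hkey
    rw [map_sum, AlgHom.commutes] at h2
    rw [Algebra.algebraMap_eq_smul_one] at h2
    rw [h2]
    refine Finset.sum_congr rfl fun j _ => ?_
    rw [map_mul, map_pow, AlgHom.commutes, hVw, Algebra.smul_def]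
  rw [hM, Finset.sum_range_succ]
  have hlast : (((((-1)^(m-m) * Anat m m : ℤ) : ℂ) * (c:ℂ)^(m-m)) • X^(2*m+1))
      = X ^ n := by
    rw [Anat_self, Nat.sub_self]
    norm_num
    rfl
  rw [hlast]
  have hTE : ∀ j ∈ Finset.range m,
      ((((-1 : ℂ) ^ (m - 1 - j) * (2 * (m : ℂ) + 1) / (2 * (j : ℂ) + 1) *
            ((m + j).choose (2 * j) : ℂ)) * (c : ℂ) ^ (m - j)) • X ^ (2 * j + 1))
      = -((((((-1)^(m-j) * Anat m j : ℤ) : ℂ) * (c:ℂ)^(m-j)) • X^(2*j+1))) := by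
    intro j hj
    rw [Finset.mem_range] at hj
    rw [← neg_smul]
    congr 1
    obtain ⟨e, rfl⟩ : ∃ e, m = j+1+e := ⟨m-(j+1), by omega⟩
    rw [show j+1+e-1-j = e by omega, show j+1+e-j = e+1 by omega]
    have hAc : (2*((j:ℂ)+1+e)+1) * (((j+1+e+j).choose (2*j)) : ℂ)
        = (2*(j:ℂ)+1) * (Anat (j+1+e) j : ℂ) := by
      have := congrArg (Nat.cast : ℕ → ℂ) (Anat_mul (j+1+e) j)
      push_cast at this ⊢
      linear_combination -this
    have h21 : (2*(j:ℂ)+1) ≠ 0 := by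
      have : ((2*j+1 : ℕ):ℂ) ≠ 0 := Nat.cast_ne_zero.2 (by omega)
      push_cast at this
      exact this
    push_cast
    field_simp
    linear_combination ((-1:ℂ)^e * (c:ℂ)^(e+1)) * hAc
  rw [Finset.sum_congr rfl hTE, Finset.sum_neg_distrib]
  abel
end
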